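/- Let σ, τ > 0. The Kolmogorov-Smirnov distance between a centered Gaussian with variance σ² and a centered Gaussian with variance τ² is at most (3/8)·|σ² - τ²|/min{σ², τ²}. -/

import Mathlib

open MeasureTheory ProbabilityTheory Real Set
open scoped NNReal

noncomputable def stdPhi (x : ℝ) : ℝ := ((gaussianReal 0 1) (Set.Iic x)).toReal

lemma gaussian_Iic_eq_stdPhi (σ : ℝ) (hσ : 0 < σ) (t : ℝ) :
    ((gaussianReal 0 (σ ^ 2).toNNReal) (Set.Iic t)).toReal = stdPhi (t / σ) := by
  have h1 : ((⟨σ^2, sq_nonneg σ⟩ : ℝ≥0) * 1) = (σ ^ 2).toNNReal := by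
    ext; simp [Real.toNNReal, max_eq_left (sq_nonneg σ)]
  have h2 : (gaussianReal 0 1).map (σ * ·) = gaussianReal 0 (σ ^ 2).toNNReal := by
    rw [gaussianReal_map_const_mul σ, mul_zero]; exact congrArg _ h1
  rw [← h2, Measure.map_apply (by fun_prop) measurableSet_Iic,
    Set.preimage_const_mul_Iic₀ _ hσ]
  rfl

lemma stdPhi_sub (a b : ℝ) (hab : a ≤ b) :
    stdPhi b - stdPhi a = ∫ x in Set.Ioc a b, gaussianPDFReal 0 1 x := by
  have hsplit : Set.Iic b = Set.Iic a ∪ Set.Ioc a b := (Set.Iic_union_Ioc_eq_Iic hab).symm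
  have hdisj : Disjoint (Set.Iic a) (Set.Ioc a b) := by
    rw [Set.disjoint_left]
    intro x hx hx'
    exact absurd hx' (by simp [Set.mem_Ioc]; intro h; linarith [Set.mem_Iic.mp hx])
  have hfin : ∀ s : Set ℝ, (gaussianReal 0 1) s ≠ ⊤ := fun s => measure_ne_top _ s
  have hb : (gaussianReal 0 1) (Set.Iic b)
      = (gaussianReal 0 1) (Set.Iic a) + (gaussianReal 0 1) (Set.Ioc a b) := by
    rw [hsplit, measure_union hdisj measurableSet_Ioc]
  have h3 : stdPhi b = stdPhi a + ((gaussianReal 0 1) (Set.Ioc a b)).toReal := by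
    rw [stdPhi, hb, ENNReal.toReal_add (hfin _) (hfin _)]; rfl
  rw [h3, gaussianReal_apply_eq_integral 0 (one_ne_zero) (Set.Ioc a b),
    ENNReal.toReal_ofReal (integral_nonneg fun x => gaussianPDFReal_nonneg 0 1 x)]
  ring

lemma pdf_le (c x : ℝ) (h : c ^ 2 ≤ x ^ 2) :
    gaussianPDFReal 0 1 x ≤ (Real.sqrt (2 * π))⁻¹ * Real.exp (-c ^ 2 / 2) := by
  simp only [gaussianPDFReal, NNReal.coe_one, mul_one, sub_zero]
  gcongr

lemma phi_int_bound (a b c : ℝ) (hab : a ≤ b)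
    (h : ∀ x ∈ Set.Ioc a b, c ^ 2 ≤ x ^ 2) :
    ∫ x in Set.Ioc a b, gaussianPDFReal 0 1 x
      ≤ (b - a) * ((Real.sqrt (2 * π))⁻¹ * Real.exp (-c ^ 2 / 2)) := by
  set M := (Real.sqrt (2 * π))⁻¹ * Real.exp (-c ^ 2 / 2) with hM
  have h1 : ∫ x in Set.Ioc a b, gaussianPDFReal 0 1 x ≤ ∫ _x in Set.Ioc a b, M := by
    apply setIntegral_mono_on (integrable_gaussianPDFReal 0 1).integrableOn
      (integrableOn_const measure_Ioc_lt_top.ne) measurableSet_Ioc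
    exact fun x hx => pdf_le c x (h x hx)
  calc ∫ x in Set.Ioc a b, gaussianPDFReal 0 1 x ≤ ∫ _x in Set.Ioc a b, M := h1
    _ = (b - a) * M := by
        rw [setIntegral_const, Real.volume_real_Ioc_of_le hab,
          smul_eq_mul]

lemma s_exp_le (s : ℝ) (hs : 0 ≤ s) : s * Real.exp (-s ^ 2 / 2) ≤ 1 := by
  have h1 : s ≤ Real.exp (s ^ 2 / 2) := by
    have := Real.add_one_le_exp (s ^ 2 / 2)
    nlinarith [sq_nonneg (s - 1)]
  have h2 : Real.exp (-s ^ 2 / 2) = (Real.exp (s ^ 2 / 2))⁻¹ := by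
    rw [← Real.exp_neg]; ring_nf
  rw [h2, mul_inv_le_iff₀ (Real.exp_pos _), one_mul]
  exact h1

lemma key (σ τ : ℝ) (hσ : 0 < σ) (hστ : σ ≤ τ) (t : ℝ) :
    |((gaussianReal 0 (σ ^ 2).toNNReal) (Set.Iic t)).toReal
      - ((gaussianReal 0 (τ ^ 2).toNNReal) (Set.Iic t)).toReal|
    ≤ (3/8 : ℝ) * (τ ^ 2 - σ ^ 2) / σ ^ 2 := by
  have hτ : 0 < τ := lt_of_lt_of_le hσ hστ
  rw [gaussian_Iic_eq_stdPhi σ hσ, gaussian_Iic_eq_stdPhi τ hτ]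
  have hsqrt : (2:ℝ) ≤ Real.sqrt (2 * π) := by
    nlinarith [Real.sq_sqrt (by positivity : (0:ℝ) ≤ 2 * π), Real.sqrt_nonneg (2 * π),
      Real.pi_gt_three]
  have hinv : (Real.sqrt (2 * π))⁻¹ ≤ 1/2 := by
    rw [inv_le_comm₀ (by positivity) (by norm_num)]
    linarith
  have hratio : (τ - σ) / σ ≤ (τ ^ 2 - σ ^ 2) / (2 * σ ^ 2) := by
    rw [div_le_div_iff₀ hσ (by positivity)]
    nlinarith [mul_nonneg (sq_nonneg (τ - σ)) hσ.le]
  set s := |t| / τ with hs_def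
  have hs0 : 0 ≤ s := by positivity
  have main : |stdPhi (t / σ) - stdPhi (t / τ)|
      ≤ s * Real.exp (-s ^ 2 / 2) * ((Real.sqrt (2 * π))⁻¹ * ((τ - σ) / σ)) := by
    rcases le_total 0 t with ht | ht
    · -- t ≥ 0 : t/τ ≤ t/σ, s = t/τ
      have hs_eq : s = t / τ := by rw [hs_def, abs_of_nonneg ht]
      have hab : t / τ ≤ t / σ := by gcongr
      have heq := stdPhi_sub _ _ hab
      rw [abs_of_nonneg (by
        rw [heq]; exact integral_nonneg fun x => gaussianPDFReal_nonneg 0 1 x), heq]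
      have hb := phi_int_bound (t / τ) (t / σ) s hab (fun x hx => by
        rw [hs_eq]
        have hx1 : t / τ ≤ x := hx.1.le
        have h0 : 0 ≤ t / τ := by positivity
        nlinarith)
      refine hb.trans (le_of_eq ?_)
      rw [hs_eq]
      field_simp
    · -- t ≤ 0 : t/σ ≤ t/τ, s = -t/τ
      have hs_eq : s = -t / τ := by rw [hs_def, abs_of_nonpos ht, neg_div]
      have hab : t / σ ≤ t / τ := by
        rw [div_le_div_iff₀ hσ hτ]
        nlinarith
      have heq := stdPhi_sub _ _ hab
      rw [abs_sub_comm, abs_of_nonneg (by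
        rw [heq]; exact integral_nonneg fun x => gaussianPDFReal_nonneg 0 1 x), heq]
      have htτ : t / τ ≤ 0 := div_nonpos_of_nonpos_of_nonneg ht hτ.le
      have hb := phi_int_bound (t / σ) (t / τ) s hab (fun x hx => by
        have hx2 : x ≤ t / τ := hx.2
        have hseq : s ^ 2 = (t / τ) ^ 2 := by rw [hs_eq]; ring
        rw [hseq]
        nlinarith [mul_nonneg (sub_nonneg.mpr hx2) (by linarith [hx.1.le] : (0:ℝ) ≤ -(t / τ) - x)])
      refine hb.trans (le_of_eq ?_)
      rw [hs_eq]
      field_simp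
      ring
  have hBnn : (0:ℝ) ≤ (Real.sqrt (2 * π))⁻¹ * ((τ - σ) / σ) :=
    mul_nonneg (by positivity) (div_nonneg (by linarith) hσ.le)
  calc |stdPhi (t / σ) - stdPhi (t / τ)|
      ≤ s * Real.exp (-s ^ 2 / 2) * ((Real.sqrt (2 * π))⁻¹ * ((τ - σ) / σ)) := main
    _ ≤ 1 * ((1/2) * ((τ ^ 2 - σ ^ 2) / (2 * σ ^ 2))) := by
        apply mul_le_mul (s_exp_le s hs0)
          (mul_le_mul hinv hratio (div_nonneg (by linarith) hσ.le) (by norm_num))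
          hBnn (by norm_num)
    _ = (τ ^ 2 - σ ^ 2) / (4 * σ ^ 2) := by ring
    _ ≤ (3 * (τ ^ 2 - σ ^ 2)) / (8 * σ ^ 2) := by
        rw [div_le_div_iff₀ (by positivity) (by positivity)]
        nlinarith [mul_nonneg (sub_nonneg.mpr (by nlinarith : σ ^ 2 ≤ τ ^ 2)) (sq_nonneg σ)]
    _ = (3/8 : ℝ) * (τ ^ 2 - σ ^ 2) / σ ^ 2 := by ring

theorem dKS_gaussian_variances (σ τ : ℝ) (hσ : 0 < σ) (hτ : 0 < τ) :
    (⨆ t : ℝ, |((gaussianReal 0 (σ ^ 2).toNNReal) (Set.Iic t)).toReal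
        - ((gaussianReal 0 (τ ^ 2).toNNReal) (Set.Iic t)).toReal|)
      ≤ (3/8 : ℝ) * |σ ^ 2 - τ ^ 2| / min (σ ^ 2) (τ ^ 2) := by
  rcases le_total σ τ with h | h
  · have hmin : min (σ ^ 2) (τ ^ 2) = σ ^ 2 := min_eq_left (by nlinarith)
    have habs : |σ ^ 2 - τ ^ 2| = τ ^ 2 - σ ^ 2 := by
      rw [abs_sub_comm, abs_of_nonneg (by nlinarith)]
    rw [hmin, habs]
    exact ciSup_le fun t => key σ τ hσ h t
  · have hmin : min (σ ^ 2) (τ ^ 2) = τ ^ 2 := min_eq_right (by nlinarith)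
    have habs : |σ ^ 2 - τ ^ 2| = σ ^ 2 - τ ^ 2 := abs_of_nonneg (by nlinarith)
    rw [hmin, habs]
    refine ciSup_le fun t => ?_
    rw [abs_sub_comm]
    exact key τ σ hτ h t
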